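/- Any positive odd integer n achieving the minimum in the definition of c_m (i.e., n = c_m) has a prime factorization using only consecutive odd primes starting at 3: if p is a prime dividing c_m and q is an odd prime with q < p, then q divides c_m; moreover 2 does not divide c_m. -/

import Mathlib

/-- Number of nontrivial proper divisors of `n`: divisors `d` with `1 < d < n`. -/
def ntpd (n : ℕ) : ℕ := (n.divisors.filter (fun d => 1 < d ∧ d < n)).card

/-- `cseq m` is the smallest positive odd integer with at least `m` nontrivial
proper divisors (with `cseq 0 = 3` by convention). -/
noncomputable def cseq (m : ℕ) : ℕ := if m = 0 then 3 else sInf {n | Odd n ∧ 0 < n ∧ m ≤ ntpd n}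

lemma ntpd_eq (n : ℕ) (hn : 1 < n) : ntpd n = n.divisors.card - 2 := by
  have h : n.divisors.filter (fun d => 1 < d ∧ d < n) = n.divisors \ {1, n} := by
    ext d
    simp only [Finset.mem_filter, Finset.mem_sdiff, Finset.mem_insert, Finset.mem_singleton,
      Nat.mem_divisors]
    constructor
    · rintro ⟨hd, h1, h2⟩
      exact ⟨hd, by omega⟩
    · rintro ⟨⟨hd, hn0⟩, h⟩
      push_neg at h
      have hd1 : 1 ≤ d := Nat.pos_of_dvd_of_pos hd (by omega)
      have hdn : d ≤ n := Nat.le_of_dvd (by omega) hd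
      exact ⟨⟨hd, hn0⟩, by omega, by omega⟩
  rw [ntpd, h, Finset.card_sdiff_of_subset]
  · congr 1
    rw [Finset.card_insert_of_notMem (by simp; omega), Finset.card_singleton]
  · intro d hd
    simp only [Finset.mem_insert, Finset.mem_singleton] at hd
    rcases hd with rfl | rfl
    · exact Nat.one_mem_divisors.mpr (by omega)
    · exact Nat.mem_divisors_self _ (by omega)

lemma card_divisors_pow (p k : ℕ) (hp : p.Prime) : (p ^ k).divisors.card = k + 1 := by
  rw [Nat.divisors_prime_pow hp, Finset.card_map, Finset.card_range]

theorem cseq_prime_factors_consecutive (m : ℕ) (hm : 1 ≤ m) :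
    ¬ 2 ∣ cseq m ∧
    ∀ p q : ℕ, p.Prime → p ∣ cseq m → q.Prime → Odd q → q < p → q ∣ cseq m := by
  have hm0 : m ≠ 0 := by omega
  have hc : cseq m = sInf {n | Odd n ∧ 0 < n ∧ m ≤ ntpd n} := by rw [cseq, if_neg hm0]
  have hSne : {n | Odd n ∧ 0 < n ∧ m ≤ ntpd n}.Nonempty := by
    refine ⟨3 ^ (m + 1), Odd.pow (by decide), Nat.pow_pos (by norm_num), ?_⟩
    rw [ntpd_eq _ (by calc 1 < 3 ^ 1 := by norm_num
                        _ ≤ 3 ^ (m+1) := Nat.pow_le_pow_right (by norm_num) (by omega)),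
      card_divisors_pow _ _ (by norm_num)]
    omega
  have hmem : cseq m ∈ {n | Odd n ∧ 0 < n ∧ m ≤ ntpd n} := by
    rw [hc]; exact Nat.sInf_mem hSne
  obtain ⟨hodd, hpos, hntpd⟩ := hmem
  refine ⟨fun h => (Nat.not_even_iff_odd.mpr hodd) (even_iff_two_dvd.mpr h), ?_⟩
  intro p q hp hpd hq hqodd hqp
  by_contra hqn
  set n := cseq m with hn
  set k := n.factorization p with hk
  set s := n / p ^ k with hs
  have hn0 : n ≠ 0 := by omega
  have hk1 : 1 ≤ k := (hp.factorization_pos_of_dvd hn0 hpd)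
  have hsd : p ^ k * s = n := Nat.ordProj_mul_ordCompl_eq_self n p
  have hspos : 0 < s := Nat.ordCompl_pos p hn0
  have hps : ¬ p ∣ s := Nat.not_dvd_ordCompl hp hn0
  have hqs : ¬ q ∣ s := fun h => hqn (h.trans ⟨p ^ k, by rw [← hsd]; ring⟩)
  have hn1 : 1 < n := by
    rcases Nat.lt_or_ge 1 n with h | h
    · exact h
    · exfalso
      have hne : n = 1 := by omega
      rw [hne] at hntpd
      have h0 : ntpd 1 = 0 := by decide
      omega
  -- the modified number
  set n' := q ^ k * s with hn'
  have hcop : Nat.Coprime (p ^ k) s := Nat.Coprime.pow_left _ ((Nat.coprime_comm.mp (hp.coprime_iff_not_dvd.mpr hps)).symm)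
  have hcop' : Nat.Coprime (q ^ k) s := Nat.Coprime.pow_left _ ((Nat.coprime_comm.mp (hq.coprime_iff_not_dvd.mpr hqs)).symm)
  have hqk : q ^ k < p ^ k := Nat.pow_lt_pow_left hqp (by omega)
  have hn'lt : n' < n := by
    rw [← hsd, hn']
    exact (Nat.mul_lt_mul_right hspos).mpr hqk
  have hn'pos : 0 < n' := Nat.mul_pos (Nat.pow_pos hq.pos) hspos
  have hsodd : Odd s := by
    rcases Nat.even_or_odd s with h | h
    · exfalso
      have : (2 : ℕ) ∣ n := (even_iff_two_dvd.mp h).trans ⟨p ^ k, by rw [← hsd]; ring⟩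
      exact (Nat.not_even_iff_odd.mpr hodd) (even_iff_two_dvd.mpr this)
    · exact h
  have hn'odd : Odd n' := Odd.mul (hqodd.pow) hsodd
  have hn'1 : 1 < n' := by
    have : 2 ≤ q ^ k := le_trans hq.two_le (Nat.le_self_pow (by omega) q)
    calc 1 < 2 * 1 := by norm_num
      _ ≤ q ^ k * s := Nat.mul_le_mul this hspos
  have hcard : n'.divisors.card = n.divisors.card := by
    rw [← hsd, hn', Nat.Coprime.card_divisors_mul hcop, Nat.Coprime.card_divisors_mul hcop',
      card_divisors_pow _ _ hp, card_divisors_pow _ _ hq]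
  have hntpd' : m ≤ ntpd n' := by
    rw [ntpd_eq _ hn'1, hcard, ← ntpd_eq _ hn1]
    exact hntpd
  have : n ≤ n' := by
    show n ≤ n'
    rw [hc]
    exact Nat.sInf_le ⟨hn'odd, hn'pos, hntpd'⟩
  omega
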